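/- Suppose F: R^{m×r} × R^{r×n} → R is L-smooth, and S is a random-k sketching matrix (I uniform over size-k subsets of {1,...,r}). Then the averaged function G(B, A) = E_S[F(B S, A)] is L·(r/k)-smooth with respect to (B, A). -/

import Mathlib

open Matrix

attribute [local instance] Matrix.frobeniusNormedAddCommGroup Matrix.frobeniusNormedSpace

/-- The random-`k` sketching matrix associated with an index set `I ⊆ {1,…,r}`. -/
noncomputable def sketch {r : ℕ} (k : ℕ) (I : Finset (Fin r)) : Matrix (Fin r) (Fin r) ℝ :=
  Matrix.diagonal (fun j => if j ∈ I then (r : ℝ) / k else 0)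

/-- The stacked pair `[B; A]` equipped with the ℓ²-product of Frobenius norms. -/
abbrev LoraPair (m n r : ℕ) :=
  WithLp 2 (Matrix (Fin m) (Fin r) ℝ × Matrix (Fin r) (Fin n) ℝ)

/-- The operator norm on `LoraPair m n r →L[ℝ] ℝ` (no longer found automatically). -/
noncomputable instance LoraPair.instNormCLM (m n r : ℕ) : Norm (LoraPair m n r →L[ℝ] ℝ) :=
  @ContinuousLinearMap.hasOpNorm ℝ ℝ _ _ _ _ _ _ _ _ _

/-- The map `[B; A] ↦ [B S; A]` for the sketching matrix `S` of index set `I`. -/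
noncomputable def sketchPair {m n r : ℕ} (k : ℕ) (I : Finset (Fin r))
    (X : LoraPair m n r) : LoraPair m n r :=
  (WithLp.equiv 2 _).symm
    (((WithLp.equiv 2 _) X).1 * sketch k I, ((WithLp.equiv 2 _) X).2)

section

/-- `LoraPair m n r` is a topological additive group (via its norm). -/
theorem loraTAG (m n r : ℕ) : IsTopologicalAddGroup (LoraPair m n r) :=
  SeminormedAddCommGroup.toIsTopologicalAddGroup

/-- Scalar multiplication on `LoraPair m n r` is continuous (via its norm). -/
theorem loraCSMul (m n r : ℕ) : ContinuousSMul ℝ (LoraPair m n r) :=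
  IsBoundedSMul.continuousSMul

attribute [local instance] loraTAG loraCSMul

set_option synthInstance.maxHeartbeats 400000 in
set_option maxHeartbeats 4000000 in
noncomputable def sketchCLM (m n r : ℕ) (k : ℕ) (I : Finset (Fin r)) :
    LoraPair m n r →L[ℝ] LoraPair m n r :=
  LinearMap.toContinuousLinearMap
    { toFun := sketchPair k I
      map_add' := by
        intro X Y
        simp only [sketchPair, WithLp.equiv_apply, WithLp.equiv_symm_apply, WithLp.ofLp_add, ← WithLp.toLp_add, Prod.fst_add,
          Prod.snd_add, Prod.mk_add_mk]
        rw [Matrix.add_mul]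
      map_smul' := by
        intro c X
        simp only [sketchPair, WithLp.equiv_apply, WithLp.equiv_symm_apply, WithLp.ofLp_smul, ← WithLp.toLp_smul, Prod.smul_fst,
          Prod.smul_snd, Prod.smul_mk, RingHom.id_apply]
        rw [Matrix.smul_mul] }

@[simp] lemma sketchCLM_apply {m n r k : ℕ} (I : Finset (Fin r)) (X : LoraPair m n r) :
    sketchCLM m n r k I X = sketchPair k I X := rfl

end

lemma frob_sq {a b : ℕ} (A : Matrix (Fin a) (Fin b) ℝ) : ‖A‖^2 = ∑ i, ∑ j, (A i j)^2 := by
  rw [frobenius_norm_def]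
  rw [← Real.rpow_natCast _ 2, ← Real.rpow_mul (by positivity)]
  norm_num

lemma count_mem {r k : ℕ} (hk : 1 ≤ k) (hkr : k ≤ r) (j : Fin r) :
    ((Finset.univ.powersetCard k).filter (fun I : Finset (Fin r) => j ∈ I)).card
      = (r-1).choose (k-1) := by
  have h1 : ((Finset.univ.powersetCard k).filter (fun I : Finset (Fin r) => ¬ j ∈ I))
      = (Finset.univ.erase j).powersetCard k := by
    ext I
    simp only [Finset.mem_filter, Finset.mem_powersetCard, Finset.subset_erase]
    constructor
    · rintro ⟨⟨hs, hc⟩, hj⟩; exact ⟨⟨hs, hj⟩, hc⟩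
    · rintro ⟨⟨hs, hj⟩, hc⟩; exact ⟨⟨hs, hc⟩, hj⟩
  have h2 := Finset.card_filter_add_card_filter_not
    (s := (Finset.univ : Finset (Fin r)).powersetCard k)
    (p := fun I : Finset (Fin r) => j ∈ I)
  rw [h1] at h2
  rw [Finset.card_powersetCard, Finset.card_powersetCard, Finset.card_erase_of_mem
    (Finset.mem_univ j), Finset.card_univ, Fintype.card_fin] at h2
  -- h2 : filter.card + (r-1).choose k = r.choose k
  have hr : 1 ≤ r := le_trans hk hkr
  have hpascal : r.choose k = (r-1).choose (k-1) + (r-1).choose k := by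
    obtain ⟨r', rfl⟩ : ∃ r', r = r' + 1 := ⟨r - 1, by omega⟩
    obtain ⟨k', rfl⟩ : ∃ k', k = k' + 1 := ⟨k - 1, by omega⟩
    simp [Nat.choose_succ_succ]
  omega

lemma sum_sq_bound {m n r : ℕ} (k : ℕ) (hk : 1 ≤ k) (hkr : k ≤ r) (W : LoraPair m n r) :
    ∑ I ∈ (Finset.univ : Finset (Fin r)).powersetCard k, ‖sketchPair k I W‖^2
      ≤ (((Finset.univ : Finset (Fin r)).powersetCard k).card : ℝ) * ((r:ℝ)/k) * ‖W‖^2 := by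
  classical
  set ρ : ℝ := (r:ℝ)/k with hρ
  have hr : 1 ≤ r := hk.trans hkr
  have hk0 : (k:ℝ) ≠ 0 := Nat.cast_ne_zero.mpr (by omega)
  have hρ1 : 1 ≤ ρ := by
    rw [hρ, le_div_iff₀ (by positivity)]
    simpa using (Nat.cast_le (α := ℝ)).mpr hkr
  set W1 := ((WithLp.equiv 2 _) W).1 with hW1
  set W2 := ((WithLp.equiv 2 _) W).2 with hW2
  have hnorm : ∀ I : Finset (Fin r),
      ‖sketchPair k I W‖^2 = ‖W1 * sketch k I‖^2 + ‖W2‖^2 := by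
    intro I
    rw [sketchPair, WithLp.prod_norm_sq_eq_of_L2]
    rfl
  have hmul : ∀ I : Finset (Fin r),
      ‖W1 * sketch k I‖^2 = ∑ i, ∑ j, (W1 i j)^2 * (if j ∈ I then ρ^2 else 0) := by
    intro I
    rw [frob_sq]
    simp [sketch, Matrix.mul_diagonal, mul_pow, apply_ite (fun x : ℝ => x^2)]
    rfl
  have hNcard : (((Finset.univ : Finset (Fin r)).powersetCard k).card : ℝ)
      = (r.choose k : ℝ) := by
    rw [Finset.card_powersetCard, Finset.card_univ, Fintype.card_fin]
  have hid : ((r-1).choose (k-1) : ℝ) * ρ^2 = (r.choose k : ℝ) * ρ := by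
    have h := Nat.add_one_mul_choose_eq (r-1) (k-1)
    have h' : (r:ℝ) * ((r-1).choose (k-1):ℝ) = (r.choose k : ℝ) * k := by
      have e1 : r - 1 + 1 = r := by omega
      have e2 : k - 1 + 1 = k := by omega
      rw [e1, e2] at h
      exact_mod_cast h
    have hstep : ρ * ((r-1).choose (k-1) : ℝ) = (r.choose k : ℝ) := by
      rw [hρ, div_mul_eq_mul_div, h', mul_div_assoc, div_self hk0, mul_one]
    calc ((r-1).choose (k-1) : ℝ) * ρ^2 = (ρ * ((r-1).choose (k-1) : ℝ)) * ρ := by ring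
      _ = (r.choose k : ℝ) * ρ := by rw [hstep]
  have hsum1 : ∑ I ∈ (Finset.univ : Finset (Fin r)).powersetCard k, ‖W1 * sketch k I‖^2
      = (((Finset.univ : Finset (Fin r)).powersetCard k).card : ℝ) * ρ * ‖W1‖^2 := by
    calc ∑ I ∈ (Finset.univ : Finset (Fin r)).powersetCard k, ‖W1 * sketch k I‖^2
        = ∑ I ∈ (Finset.univ : Finset (Fin r)).powersetCard k,
            ∑ i, ∑ j, (W1 i j)^2 * (if j ∈ I then ρ^2 else 0) := by
          exact Finset.sum_congr rfl fun I _ => hmul I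
      _ = ∑ i, ∑ j, (W1 i j)^2 *
            (∑ I ∈ (Finset.univ : Finset (Fin r)).powersetCard k,
              (if j ∈ I then ρ^2 else 0)) := by
          rw [Finset.sum_comm]
          refine Finset.sum_congr rfl fun i _ => ?_
          rw [Finset.sum_comm]
          refine Finset.sum_congr rfl fun j _ => ?_
          rw [Finset.mul_sum]
      _ = ∑ i, ∑ j, (W1 i j)^2 * ((r.choose k : ℝ) * ρ) := by
          refine Finset.sum_congr rfl fun i _ => Finset.sum_congr rfl fun j _ => ?_
          congr 1
          rw [← Finset.sum_filter, Finset.sum_const, count_mem hk hkr j, nsmul_eq_mul, hid]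
      _ = (((Finset.univ : Finset (Fin r)).powersetCard k).card : ℝ) * ρ * ‖W1‖^2 := by
          rw [frob_sq, hNcard]
          simp_rw [← Finset.sum_mul]
          ring
  have hW : ‖W‖^2 = ‖W1‖^2 + ‖W2‖^2 := WithLp.prod_norm_sq_eq_of_L2 W
  have hNnn : (0:ℝ) ≤ (((Finset.univ : Finset (Fin r)).powersetCard k).card : ℝ) :=
    Nat.cast_nonneg _
  calc ∑ I ∈ (Finset.univ : Finset (Fin r)).powersetCard k, ‖sketchPair k I W‖^2
      = (((Finset.univ : Finset (Fin r)).powersetCard k).card : ℝ) * ρ * ‖W1‖^2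
        + (((Finset.univ : Finset (Fin r)).powersetCard k).card : ℝ) * ‖W2‖^2 := by
        simp_rw [hnorm, Finset.sum_add_distrib, hsum1, Finset.sum_const, nsmul_eq_mul]
    _ ≤ (((Finset.univ : Finset (Fin r)).powersetCard k).card : ℝ) * ρ * ‖W1‖^2
        + (((Finset.univ : Finset (Fin r)).powersetCard k).card : ℝ) * ρ * ‖W2‖^2 := by
        gcongr
        nlinarith [sq_nonneg ‖W2‖, hρ1, hNnn]
    _ = (((Finset.univ : Finset (Fin r)).powersetCard k).card : ℝ) * ρ * ‖W‖^2 := by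
        rw [hW]; ring


set_option synthInstance.maxHeartbeats 400000 in
set_option maxHeartbeats 1000000 in
/-- If `F` is `L`-smooth in the stacked variable `[B; A]` (Frobenius
norms) and `S` is a random-`k` sketching matrix with `I` uniform over size-`k` subsets of
`{1,…,r}`, then the averaged function `G(B,A) = E_S[F(B S, A)]` is `L·(r/k)`-smooth. -/
theorem sketched_smoothness_expectation (m n r k : ℕ) (hk : 1 ≤ k) (hkr : k ≤ r)
    (L : ℝ) (F : LoraPair m n r → ℝ)
    (hdiff : Differentiable ℝ F)
    (hLip : ∀ X Y, ‖fderiv ℝ F X - fderiv ℝ F Y‖ ≤ L * ‖X - Y‖) :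
    Differentiable ℝ (fun X : LoraPair m n r =>
        (((Finset.univ : Finset (Fin r)).powersetCard k).card : ℝ)⁻¹ *
          ∑ I ∈ (Finset.univ : Finset (Fin r)).powersetCard k, F (sketchPair k I X)) ∧
    ∀ X Y : LoraPair m n r,
      ‖fderiv ℝ (fun Z : LoraPair m n r =>
            (((Finset.univ : Finset (Fin r)).powersetCard k).card : ℝ)⁻¹ *
              ∑ I ∈ (Finset.univ : Finset (Fin r)).powersetCard k, F (sketchPair k I Z)) X
          - fderiv ℝ (fun Z : LoraPair m n r =>
            (((Finset.univ : Finset (Fin r)).powersetCard k).card : ℝ)⁻¹ *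
              ∑ I ∈ (Finset.univ : Finset (Fin r)).powersetCard k, F (sketchPair k I Z)) Y‖
        ≤ L * ((r : ℝ) / k) * ‖X - Y‖ := by
  classical
  haveI := loraTAG m n r
  haveI := loraCSMul m n r
  set P := (Finset.univ : Finset (Fin r)).powersetCard k with hP
  set c : ℝ := ((P.card : ℝ))⁻¹ with hc
  have hNpos : 0 < P.card := by
    rw [hP, Finset.card_powersetCard, Finset.card_univ, Fintype.card_fin]
    exact Nat.choose_pos hkr
  have hNne : ((P.card : ℝ)) ≠ 0 := Nat.cast_ne_zero.mpr hNpos.ne'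
  have hc0 : 0 ≤ c := by rw [hc]; positivity
  have hT : ∀ (I : Finset (Fin r)) (X : LoraPair m n r),
      HasFDerivAt (fun Z => F (sketchPair k I Z))
        ((fderiv ℝ F (sketchPair k I X)).comp (sketchCLM m n r k I)) X := by
    intro I X
    have h1 : HasFDerivAt (sketchCLM m n r k I) (sketchCLM m n r k I) X :=
      (sketchCLM m n r k I).hasFDerivAt
    exact (hdiff (sketchPair k I X)).hasFDerivAt.comp X h1
  have hG : ∀ X, HasFDerivAt (fun Z : LoraPair m n r => c * ∑ I ∈ P, F (sketchPair k I Z))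
      (c • ∑ I ∈ P, (fderiv ℝ F (sketchPair k I X)).comp (sketchCLM m n r k I)) X := by
    intro X
    exact (HasFDerivAt.fun_sum (fun I _ => hT I X)).const_mul c
  refine ⟨fun X => (hG X).differentiableAt, fun X Y => ?_⟩
  rw [(hG X).fderiv, (hG Y).fderiv]
  by_cases hXY : X = Y
  · subst hXY
    simp
    exact ContinuousLinearMap.opNorm_zero.le
  · have hd : 0 < ‖X - Y‖ := by rwa [norm_pos_iff, sub_ne_zero]
    have hL0 : 0 ≤ L := by nlinarith [(show 0 ≤ ‖fderiv ℝ F X - fderiv ℝ F Y‖ from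
      ContinuousLinearMap.opNorm_nonneg _), hLip X Y]
    have hρ0 : (0:ℝ) ≤ (r:ℝ)/k := by positivity
    have hdiff_eq :
        (c • ∑ I ∈ P, (fderiv ℝ F (sketchPair k I X)).comp (sketchCLM m n r k I))
          - (c • ∑ I ∈ P, (fderiv ℝ F (sketchPair k I Y)).comp (sketchCLM m n r k I))
        = c • ∑ I ∈ P, ((fderiv ℝ F (sketchPair k I X)
            - fderiv ℝ F (sketchPair k I Y)).comp (sketchCLM m n r k I)) := by
      rw [← smul_sub, ← Finset.sum_sub_distrib]
      congr 1
    rw [hdiff_eq]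
    refine ContinuousLinearMap.opNorm_le_bound _
      (mul_nonneg (mul_nonneg hL0 hρ0) (norm_nonneg _)) fun Z => ?_
    have hsub : ∀ I : Finset (Fin r),
        sketchPair k I X - sketchPair k I Y = sketchPair k I (X - Y) := by
      intro I
      have := (sketchCLM m n r k I).map_sub X Y
      simpa using this.symm
    have hCS : ∑ I ∈ P, ‖sketchPair k I (X-Y)‖ * ‖sketchPair k I Z‖
        ≤ (P.card : ℝ) * ((r:ℝ)/k) * (‖X-Y‖ * ‖Z‖) := by
      have h1 := Finset.sum_mul_sq_le_sq_mul_sq P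
        (fun I => ‖sketchPair k I (X-Y)‖) (fun I => ‖sketchPair k I Z‖)
      have h2 := sum_sq_bound k hk hkr (X-Y)
      have h3 := sum_sq_bound k hk hkr Z
      rw [← hP] at h2 h3
      have hA0 : (0:ℝ) ≤ ∑ I ∈ P, ‖sketchPair k I (X-Y)‖^2 :=
        Finset.sum_nonneg fun I _ => sq_nonneg _
      have hB0 : (0:ℝ) ≤ ∑ I ∈ P, ‖sketchPair k I Z‖^2 :=
        Finset.sum_nonneg fun I _ => sq_nonneg _
      have hS0 : (0:ℝ) ≤ ∑ I ∈ P, ‖sketchPair k I (X-Y)‖ * ‖sketchPair k I Z‖ :=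
        Finset.sum_nonneg fun I _ => mul_nonneg (norm_nonneg _) (norm_nonneg _)
      have hC0 : (0:ℝ) ≤ (P.card : ℝ) * ((r:ℝ)/k) * (‖X-Y‖ * ‖Z‖) := by positivity
      have hsq : (∑ I ∈ P, ‖sketchPair k I (X-Y)‖ * ‖sketchPair k I Z‖)^2
          ≤ ((P.card : ℝ) * ((r:ℝ)/k) * (‖X-Y‖ * ‖Z‖))^2 := by
        calc (∑ I ∈ P, ‖sketchPair k I (X-Y)‖ * ‖sketchPair k I Z‖)^2
            ≤ (∑ I ∈ P, ‖sketchPair k I (X-Y)‖^2) * (∑ I ∈ P, ‖sketchPair k I Z‖^2) := h1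
          _ ≤ ((P.card : ℝ) * ((r:ℝ)/k) * ‖X-Y‖^2) * ((P.card : ℝ) * ((r:ℝ)/k) * ‖Z‖^2) :=
              mul_le_mul h2 h3 hB0 (by positivity)
          _ = ((P.card : ℝ) * ((r:ℝ)/k) * (‖X-Y‖ * ‖Z‖))^2 := by ring
      nlinarith [hsq, hS0, hC0]
    calc ‖(c • ∑ I ∈ P, ((fderiv ℝ F (sketchPair k I X)
            - fderiv ℝ F (sketchPair k I Y)).comp (sketchCLM m n r k I))) Z‖
        = c * ‖∑ I ∈ P, (fderiv ℝ F (sketchPair k I X)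
            - fderiv ℝ F (sketchPair k I Y)) (sketchPair k I Z)‖ := by
          rw [ContinuousLinearMap.smul_apply, norm_smul, Real.norm_eq_abs, abs_of_nonneg hc0]
          congr 1
          simp only [ContinuousLinearMap.sum_apply, ContinuousLinearMap.comp_apply,
            sketchCLM_apply]
      _ ≤ c * ∑ I ∈ P, ‖(fderiv ℝ F (sketchPair k I X)
            - fderiv ℝ F (sketchPair k I Y)) (sketchPair k I Z)‖ := by
          gcongr
          exact norm_sum_le _ _
      _ ≤ c * ∑ I ∈ P, (L * ‖sketchPair k I (X-Y)‖) * ‖sketchPair k I Z‖ := by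
          gcongr with I hI
          calc ‖(fderiv ℝ F (sketchPair k I X)
                - fderiv ℝ F (sketchPair k I Y)) (sketchPair k I Z)‖
              ≤ ‖fderiv ℝ F (sketchPair k I X)
                - fderiv ℝ F (sketchPair k I Y)‖ * ‖sketchPair k I Z‖ :=
                ContinuousLinearMap.le_opNorm _ _
            _ ≤ (L * ‖sketchPair k I (X-Y)‖) * ‖sketchPair k I Z‖ := by
                have := hLip (sketchPair k I X) (sketchPair k I Y)
                rw [hsub I] at this
                exact mul_le_mul_of_nonneg_right this (norm_nonneg _)
      _ = c * L * ∑ I ∈ P, ‖sketchPair k I (X-Y)‖ * ‖sketchPair k I Z‖ := by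
          rw [Finset.mul_sum, Finset.mul_sum]
          exact Finset.sum_congr rfl fun I _ => by ring
      _ ≤ c * L * ((P.card : ℝ) * ((r:ℝ)/k) * (‖X-Y‖ * ‖Z‖)) := by
          apply mul_le_mul_of_nonneg_left hCS (mul_nonneg hc0 hL0)
      _ = L * ((r:ℝ)/k) * ‖X-Y‖ * ‖Z‖ := by
          rw [hc]
          field_simp
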